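/- Let μ > 0 and let r ∈ C¹((0,∞)²) be positive with R₀ a^μ v^σ ≤ r(a,v) ≤ R₁ a^μ v^σ for some R₀, R₁ > 0 and σ ∈ ℝ. For ε > 0 and (A,V) ∈ (0,∞)², let x^ε_{A,V} : [0,∞) → (0,∞) be the solution of the ODE ∂_t x^ε_{A,V}(t) = (1/ε) r(x^ε_{A,V}(t), V)(c₀ V^{2/3} − x^ε_{A,V}(t)) with x^ε_{A,V}(0) = A, where c₀ := (36π)^{1/3}. Then for every fixed (A,V) ∈ (0,∞)² and every t > 0, lim_{ε→0} x^ε_{A,V}(t) = c₀ V^{2/3}; moreover, the convergence is uniform on compact subsets 𝐾 ⊂ (0,∞)³ of the variables (A,V,t). -/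

import Mathlib

open MeasureTheory Real Set Filter Topology
open scoped ENNReal

noncomputable section

/-- `c₀ = (36π)^(1/3)`, the isoperimetric constant relating area and volume of a ball. -/
def c0 : ℝ := (36 * Real.pi) ^ ((1 : ℝ) / 3)

/-- The open quadrant `(0,∞)²` of pairs `(a,v)` (surface area, volume). -/
def Quad : Set (ℝ × ℝ) := {p | 0 < p.1 ∧ 0 < p.2}

/-- The isoperimetric region `{(a,v) : v > 0, a ≥ c₀ v^(2/3)}`. -/
def IsoRegion : Set (ℝ × ℝ) := {p | 0 < p.2 ∧ c0 * p.2 ^ ((2 : ℝ) / 3) ≤ p.1}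

/-- A nonnegative (Radon) measure on `(0,∞)²` supported in `{a ≥ c₀ v^(2/3)}`:
it gives zero mass to the complement of the isoperimetric region. -/
def IsIsoMeasure (m : Measure (ℝ × ℝ)) : Prop := m IsoRegionᶜ = 0

/-- `C₀((0,∞)²)`: continuous functions vanishing at infinity of the open quadrant
(extended by zero outside the quadrant). -/
def IsC0Quad (φ : ℝ × ℝ → ℝ) : Prop :=
  Continuous φ ∧ (∀ p, p ∉ Quad → φ p = 0) ∧
    ∀ δ > 0, ∃ Kc : Set (ℝ × ℝ), IsCompact Kc ∧ Kc ⊆ Quad ∧ ∀ p ∉ Kc, |φ p| ≤ δ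

/-- `C_c((0,∞)²)`: continuous functions with compact support contained in the quadrant. -/
def IsCcQuad (φ : ℝ × ℝ → ℝ) : Prop :=
  Continuous φ ∧ HasCompactSupport φ ∧ tsupport φ ⊆ Quad

/-- `C₀((0,∞))`: continuous functions on `(0,∞)` vanishing at infinity (extended by zero). -/
def IsC0Pos (φ : ℝ → ℝ) : Prop :=
  Continuous φ ∧ (∀ v, v ∉ Ioi (0 : ℝ) → φ v = 0) ∧
    ∀ δ > 0, ∃ Kc : Set ℝ, IsCompact Kc ∧ Kc ⊆ Ioi (0 : ℝ) ∧ ∀ v ∉ Kc, |φ v| ≤ δ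

/-- `C_c((0,∞))`: continuous functions with compact support contained in `(0,∞)`. -/
def IsCcPos (φ : ℝ → ℝ) : Prop :=
  Continuous φ ∧ HasCompactSupport φ ∧ tsupport φ ⊆ Ioi (0 : ℝ)

/-- Partial derivative in the area variable `a`. -/
def da (φ : ℝ × ℝ → ℝ) (p : ℝ × ℝ) : ℝ := deriv (fun a => φ (a, p.2)) p.1

/-- Time-dependent test functions `φ ∈ C¹_c([0,∞); C¹_c((0,∞)²))`. -/
def IsTestFun (ψ : ℝ × (ℝ × ℝ) → ℝ) : Prop :=
  ContDiff ℝ 1 ψ ∧ HasCompactSupport ψ ∧ ∀ q : ℝ × (ℝ × ℝ), q.2 ∉ Quad → ψ q = 0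

/-- The assumptions on the coagulation kernel `K`: continuity, symmetry, and the
two-sided power law bounds with constants `K₀ ≥ K₁ > 0` and exponents
`al > 0`, `be ∈ (0,1)`, `be - al ∈ (0,1)`. -/
structure IsCoagKernel (K : ℝ × ℝ → ℝ × ℝ → ℝ) (K₀ K₁ al be : ℝ) : Prop where
  cont : ContinuousOn (fun q : (ℝ × ℝ) × (ℝ × ℝ) => K q.1 q.2) (Quad ×ˢ Quad)
  symm : ∀ η η', K η η' = K η' η
  K1_pos : 0 < K₁
  K1_le_K0 : K₁ ≤ K₀
  al_pos : 0 < al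
  be_mem : be ∈ Ioo (0 : ℝ) 1
  be_sub_al_mem : be - al ∈ Ioo (0 : ℝ) 1
  lower : ∀ η ∈ Quad, ∀ η' ∈ Quad,
    K₁ * (η.2 ^ (-al) * η'.2 ^ be + η'.2 ^ (-al) * η.2 ^ be) ≤ K η η'
  upper : ∀ η ∈ Quad, ∀ η' ∈ Quad,
    K η η' ≤ K₀ * (η.2 ^ (-al) * η'.2 ^ be + η'.2 ^ (-al) * η.2 ^ be)

/-- The assumptions on an admissible fusion kernel `r`: positivity, `C¹` regularity,
two-sided power law bounds `R₀ a^mu v^sg ≤ r ≤ R₁ a^mu v^sg`, and the structural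
differential inequalities on the isoperimetric region. -/
structure IsFusionKernel (r : ℝ × ℝ → ℝ) (R₀ R₁ mu sg B : ℝ) : Prop where
  smooth : ContDiffOn ℝ 1 r Quad
  pos : ∀ η ∈ Quad, 0 < r η
  R0_pos : 0 < R₀
  R1_pos : 0 < R₁
  B_pos : 0 < B
  lower : ∀ η ∈ Quad, R₀ * η.1 ^ mu * η.2 ^ sg ≤ r η
  upper : ∀ η ∈ Quad, r η ≤ R₁ * η.1 ^ mu * η.2 ^ sg
  cond_pos : 0 < mu → ∀ η ∈ IsoRegion, 0 ≤ da r η - mu * η.1⁻¹ * r η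
  cond_nonpos : mu ≤ 0 → ∀ η ∈ IsoRegion,
    0 ≤ da r η * (η.1 - c0 * η.2 ^ ((2 : ℝ) / 3)) + r η
  cond_upper : ∀ η ∈ IsoRegion, da r η ≤ B * η.1⁻¹ * r η

/-- The weak identity at time `t` against the test function `ψ`, for the
fusion–coagulation equation with fusion coefficient `c` (the `Λ`-fusion problem
corresponds to `c = Λ⁻¹`). -/
def WeakIdentity (K : ℝ × ℝ → ℝ × ℝ → ℝ) (r : ℝ × ℝ → ℝ) (c : ℝ)
    (fin : Measure (ℝ × ℝ)) (f : ℝ → Measure (ℝ × ℝ))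
    (ψ : ℝ × (ℝ × ℝ) → ℝ) (t : ℝ) : Prop :=
  (∫ η, ψ (t, η) ∂(f t)) - (∫ η, ψ (0, η) ∂fin)
      - ∫ s in (0 : ℝ)..t, ∫ η, deriv (fun u => ψ (u, η)) s ∂(f s)
    = (∫ s in (0 : ℝ)..t, (1 / 2) *
        ∫ η, ∫ η', K η η' * (ψ (s, η + η') - ψ (s, η) - ψ (s, η')) ∂(f s) ∂(f s))
      + c * ∫ s in (0 : ℝ)..t,
          ∫ η, r η * (c0 * η.2 ^ ((2 : ℝ) / 3) - η.1) * da (fun p => ψ (s, p)) η ∂(f s)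

/-- A weak solution of the fusion–coagulation problem with fusion coefficient `c`
(power-law exponents `al`, `be` of the coagulation kernel enter the a priori moment
bound), initial datum `fin`: a weak-* continuous family of measures supported in the
isoperimetric region, with locally uniformly bounded `(v^(-al) + v^be)`-moments,
satisfying the weak identity for all test functions and times. -/
def IsWeakSolution (K : ℝ × ℝ → ℝ × ℝ → ℝ) (r : ℝ × ℝ → ℝ) (c al be : ℝ)
    (fin : Measure (ℝ × ℝ)) (f : ℝ → Measure (ℝ × ℝ)) : Prop :=
  (∀ t, 0 ≤ t → IsIsoMeasure (f t)) ∧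
  (∀ φ, IsC0Quad φ → ContinuousOn (fun t => ∫ η, φ η ∂(f t)) (Ici (0 : ℝ))) ∧
  (∀ T > (0 : ℝ), ∃ C : ℝ≥0∞, C ≠ ⊤ ∧ ∀ t ∈ Icc (0 : ℝ) T,
      (∫⁻ η, ENNReal.ofReal (η.2 ^ (-al) + η.2 ^ be) ∂(f t)) ≤ C) ∧
  (∀ ψ, IsTestFun ψ → ∀ t, 0 ≤ t → WeakIdentity K r c fin f ψ t)

/-- The regularized fusion kernel `r̄_ε(a,v) = r(a,v)/(1 + ε^(2μ+2) a^μ)`. -/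
def rbarFn (r : ℝ × ℝ → ℝ) (mu ε : ℝ) (η : ℝ × ℝ) : ℝ :=
  r η / (1 + ε ^ (2 * mu + 2) * η.1 ^ mu)

end


lemma c0_pos : 0 < c0 := Real.rpow_pos_of_pos (by positivity) _

/-- Invariance: the characteristic stays above `min (X 0) L`. -/
lemma aux_lower
    (r : ℝ × ℝ → ℝ) (hr_pos : ∀ η ∈ Quad, 0 < r η)
    (ε V L m : ℝ) (hε : 0 < ε) (hV : 0 < V)
    (X : ℝ → ℝ)
    (hXpos : ∀ t ≥ (0 : ℝ), 0 < X t)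
    (hode : ∀ t ≥ (0 : ℝ), HasDerivAt X (ε⁻¹ * r (X t, V) * (L - X t)) t)
    (hm0 : m ≤ X 0) (hmL : m ≤ L) :
    ∀ t ≥ (0 : ℝ), m ≤ X t := by
  intro t ht
  by_contra hcon
  push_neg at hcon
  have ht0 : 0 < t := by
    rcases ht.lt_or_eq with h | h
    · exact h
    · exact absurd hcon (by rw [← h]; exact not_lt.2 hm0)
  set S : Set ℝ := Icc 0 t ∩ X ⁻¹' Ici m with hS
  have hScl : IsClosed S := by
    have hXc : ContinuousOn X (Icc 0 t) :=
      fun s hs => ((hode s hs.1).continuousAt).continuousWithinAt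
    exact hXc.preimage_isClosed_of_isClosed isClosed_Icc isClosed_Ici
  have hS0 : (0 : ℝ) ∈ S := ⟨⟨le_refl 0, ht0.le⟩, hm0⟩
  have hSbdd : BddAbove S := ⟨t, fun s hs => hs.1.2⟩
  set σ := sSup S with hσdef
  have hσS : σ ∈ S := hScl.csSup_mem ⟨0, hS0⟩ hSbdd
  have hσ0 : 0 ≤ σ := hσS.1.1
  have hσm : m ≤ X σ := hσS.2
  have hσt : σ < t := by
    rcases lt_or_eq_of_le hσS.1.2 with h | h
    · exact h
    · exact absurd hσm (by rw [h]; exact not_le.2 hcon)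
  have hbelow : ∀ s, σ < s → s ≤ t → X s < m := by
    intro s h1 h2
    by_contra hge
    push_neg at hge
    have hsS : s ∈ S := ⟨⟨hσ0.trans h1.le, h2⟩, hge⟩
    exact absurd (le_csSup hSbdd hsS) (not_le.2 h1)
  have hmono : StrictMonoOn X (Icc σ t) := by
    apply strictMonoOn_of_deriv_pos (convex_Icc σ t)
    · exact fun s hs => ((hode s (hσ0.trans hs.1)).continuousAt).continuousWithinAt
    · intro s hs
      rw [interior_Icc] at hs
      have hs0 : 0 ≤ s := hσ0.trans hs.1.le
      rw [(hode s hs0).deriv]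
      have hXsm : X s < m := hbelow s hs.1 hs.2.le
      exact mul_pos (mul_pos (inv_pos.2 hε) (hr_pos _ ⟨hXpos s hs0, hV⟩))
        (sub_pos.2 (hXsm.trans_le hmL))
  have hlt : X σ < X t := hmono (left_mem_Icc.2 hσt.le) (right_mem_Icc.2 hσt.le) hσt
  exact absurd (hσm.trans hlt.le) (not_le.2 hcon)

/-- Quantitative relaxation estimate for a single characteristic. -/
lemma aux_key
    (r : ℝ × ℝ → ℝ) (mu sg R₀ : ℝ) (hmu : 0 < mu) (hR0 : 0 < R₀)
    (hr_pos : ∀ η ∈ Quad, 0 < r η)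
    (hr_lower : ∀ η ∈ Quad, R₀ * η.1 ^ mu * η.2 ^ sg ≤ r η)
    (ε A V : ℝ) (hε : 0 < ε) (hA : 0 < A) (hV : 0 < V)
    (X : ℝ → ℝ) (hX0 : X 0 = A)
    (hXpos : ∀ t ≥ (0 : ℝ), 0 < X t)
    (hode : ∀ t ≥ (0 : ℝ),
      HasDerivAt X (ε⁻¹ * r (X t, V) * (c0 * V ^ ((2 : ℝ) / 3) - X t)) t)
    (t : ℝ) (ht : 0 ≤ t) :
    |X t - c0 * V ^ ((2 : ℝ) / 3)| ≤
      |A - c0 * V ^ ((2 : ℝ) / 3)| *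
        Real.exp (-(R₀ * (min A (c0 * V ^ ((2 : ℝ) / 3))) ^ mu * V ^ sg * t) / ε) := by
  have hε0 : ε ≠ 0 := hε.ne'
  set L := c0 * V ^ ((2 : ℝ) / 3) with hLdef
  have hL : 0 < L := mul_pos c0_pos (Real.rpow_pos_of_pos hV _)
  set m := min A L with hmdef
  have hm : 0 < m := lt_min hA hL
  have hlow : ∀ s ≥ (0 : ℝ), m ≤ X s :=
    aux_lower r hr_pos ε V L m hε hV X hXpos hode
      (by rw [hX0]; exact min_le_left _ _) (min_le_right _ _)
  set ρ := R₀ * m ^ mu * V ^ sg with hρdef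
  have hρ : 0 < ρ :=
    mul_pos (mul_pos hR0 (Real.rpow_pos_of_pos hm _)) (Real.rpow_pos_of_pos hV _)
  have hρle : ∀ s ≥ (0 : ℝ), ρ ≤ r (X s, V) := by
    intro s hs
    have h1 : R₀ * (X s) ^ mu * V ^ sg ≤ r (X s, V) := hr_lower (X s, V) ⟨hXpos s hs, hV⟩
    refine le_trans ?_ h1
    exact mul_le_mul_of_nonneg_right
      (mul_le_mul_of_nonneg_left (Real.rpow_le_rpow hm.le (hlow s hs) hmu.le) hR0.le)
      (Real.rpow_pos_of_pos hV _).le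
  set g : ℝ → ℝ := fun s => (X s - L) ^ 2 * Real.exp (2 * ρ * s / ε) with hgdef
  have hgd : ∀ s ≥ (0 : ℝ), HasDerivAt g
      ((2 * (X s - L) * (ε⁻¹ * r (X s, V) * (L - X s))) * Real.exp (2 * ρ * s / ε)
        + (X s - L) ^ 2 * (Real.exp (2 * ρ * s / ε) * (2 * ρ / ε))) s := by
    intro s hs
    have h1 : HasDerivAt (fun u => X u - L) (ε⁻¹ * r (X s, V) * (L - X s)) s :=
      (hode s hs).sub_const L
    have h2 : HasDerivAt (fun u => (X u - L) ^ 2)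
        (2 * (X s - L) * (ε⁻¹ * r (X s, V) * (L - X s))) s := by
      simpa using h1.fun_pow 2
    have h3 : HasDerivAt (fun u : ℝ => 2 * ρ * u / ε) (2 * ρ / ε) s := by
      simpa using ((hasDerivAt_id s).const_mul (2 * ρ)).div_const ε
    exact h2.mul h3.exp
  have hval : ∀ s ≥ (0 : ℝ),
      (2 * (X s - L) * (ε⁻¹ * r (X s, V) * (L - X s))) * Real.exp (2 * ρ * s / ε)
        + (X s - L) ^ 2 * (Real.exp (2 * ρ * s / ε) * (2 * ρ / ε)) ≤ 0 := by
    intro s hs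
    have hr' := hρle s hs
    have hE : 0 < Real.exp (2 * ρ * s / ε) := Real.exp_pos _
    have heq : (2 * (X s - L) * (ε⁻¹ * r (X s, V) * (L - X s))) * Real.exp (2 * ρ * s / ε)
        + (X s - L) ^ 2 * (Real.exp (2 * ρ * s / ε) * (2 * ρ / ε))
        = -(2 * ε⁻¹ * (r (X s, V) - ρ) * (X s - L) ^ 2 * Real.exp (2 * ρ * s / ε)) := by
      field_simp
      ring
    rw [heq, neg_nonpos]
    exact mul_nonneg (mul_nonneg (mul_nonneg (by positivity) (sub_nonneg.2 hr'))
      (sq_nonneg _)) hE.le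
  have hanti : AntitoneOn g (Ici (0 : ℝ)) := by
    apply antitoneOn_of_deriv_nonpos (convex_Ici 0)
    · exact fun s hs => ((hgd s hs).continuousAt).continuousWithinAt
    · intro s hs
      rw [interior_Ici] at hs
      exact (hgd s hs.le).differentiableAt.differentiableWithinAt
    · intro s hs
      rw [interior_Ici] at hs
      rw [(hgd s hs.le).deriv]
      exact hval s hs.le
  have hg0 : g 0 = (A - L) ^ 2 := by simp [hgdef, hX0]
  have hgt : g t ≤ (A - L) ^ 2 := hg0 ▸ hanti self_mem_Ici (mem_Ici.2 ht) ht
  have hE : 0 < Real.exp (2 * ρ * t / ε) := Real.exp_pos _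
  have hsq : (X t - L) ^ 2 ≤ (|A - L| * Real.exp (-(ρ * t) / ε)) ^ 2 := by
    have h1 : (X t - L) ^ 2 ≤ (A - L) ^ 2 / Real.exp (2 * ρ * t / ε) :=
      (le_div_iff₀ hE).2 hgt
    refine h1.trans_eq ?_
    rw [mul_pow, sq_abs, sq (Real.exp _), ← Real.exp_add, div_eq_mul_inv, ← Real.exp_neg]
    congr 1
    ring
  have hnn : 0 ≤ |A - L| * Real.exp (-(ρ * t) / ε) := by positivity
  calc |X t - L| = Real.sqrt ((X t - L) ^ 2) := (Real.sqrt_sq_eq_abs _).symm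
    _ ≤ Real.sqrt ((|A - L| * Real.exp (-(ρ * t) / ε)) ^ 2) := Real.sqrt_le_sqrt hsq
    _ = |A - L| * Real.exp (-(ρ * t) / ε) := Real.sqrt_sq hnn
    _ = |A - L| * Real.exp (-(ρ * t) / ε) := rfl

/-- the characteristics of the fast-fusion transport term converge to the
isoperimetric line as ε → 0, pointwise and uniformly on compact subsets of (0,∞)³. -/
theorem fusion_characteristics_relax_to_sphere
    (mu sg R₀ R₁ : ℝ) (hmu : 0 < mu) (hR0 : 0 < R₀) (hR1 : 0 < R₁)
    (r : ℝ × ℝ → ℝ)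
    (hr_smooth : ContDiffOn ℝ 1 r Quad)
    (hr_pos : ∀ η ∈ Quad, 0 < r η)
    (hr_lower : ∀ η ∈ Quad, R₀ * η.1 ^ mu * η.2 ^ sg ≤ r η)
    (hr_upper : ∀ η ∈ Quad, r η ≤ R₁ * η.1 ^ mu * η.2 ^ sg)
    -- x ε (A,V) is the solution of ∂_t x = ε⁻¹ r(x,V)(c₀V^{2/3} − x), x(0) = A
    (x : ℝ → ℝ × ℝ → ℝ → ℝ)
    (hx0 : ∀ ε > (0 : ℝ), ∀ p ∈ Quad, x ε p 0 = p.1)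
    (hx_pos : ∀ ε > (0 : ℝ), ∀ p ∈ Quad, ∀ t ≥ (0 : ℝ), 0 < x ε p t)
    (hode : ∀ ε > (0 : ℝ), ∀ p ∈ Quad, ∀ t ≥ (0 : ℝ),
      HasDerivAt (x ε p)
        (ε⁻¹ * r (x ε p t, p.2) * (c0 * p.2 ^ ((2 : ℝ) / 3) - x ε p t)) t) :
    -- pointwise convergence for fixed (A,V) and t > 0
    (∀ p ∈ Quad, ∀ t > (0 : ℝ),
      Tendsto (fun ε => x ε p t) (𝓝[>] (0 : ℝ)) (𝓝 (c0 * p.2 ^ ((2 : ℝ) / 3)))) ∧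
    -- uniform convergence on compact subsets of (0,∞)³ in the variables (A,V,t)
    (∀ Kc : Set ((ℝ × ℝ) × ℝ), IsCompact Kc → Kc ⊆ Quad ×ˢ Ioi (0 : ℝ) →
      TendstoUniformlyOn (fun ε q => x ε q.1 q.2)
        (fun q => c0 * q.1.2 ^ ((2 : ℝ) / 3)) (𝓝[>] (0 : ℝ)) Kc) := by
  have huni : ∀ Kc : Set ((ℝ × ℝ) × ℝ), IsCompact Kc → Kc ⊆ Quad ×ˢ Ioi (0 : ℝ) →
      TendstoUniformlyOn (fun ε q => x ε q.1 q.2)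
        (fun q => c0 * q.1.2 ^ ((2 : ℝ) / 3)) (𝓝[>] (0 : ℝ)) Kc := by
    intro Kc hKc hKsub
    rcases Kc.eq_empty_or_nonempty with rfl | hne
    · exact tendstoUniformlyOn_empty
    have hVpos : ∀ q ∈ Kc, 0 < q.1.2 := fun q hq => ((hKsub hq).1).2
    have hApos : ∀ q ∈ Kc, 0 < q.1.1 := fun q hq => ((hKsub hq).1).1
    have htpos : ∀ q ∈ Kc, 0 < q.2 := fun q hq => (hKsub hq).2
    have hV2 : ContinuousOn (fun q : (ℝ × ℝ) × ℝ => c0 * q.1.2 ^ ((2 : ℝ) / 3)) Kc :=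
      continuousOn_const.mul
        ((continuous_fst.snd.continuousOn).rpow_const (fun q _ => Or.inr (by norm_num)))
    set φ : (ℝ × ℝ) × ℝ → ℝ :=
      fun q => R₀ * (min q.1.1 (c0 * q.1.2 ^ ((2 : ℝ) / 3))) ^ mu * q.1.2 ^ sg * q.2 with hφdef
    have hφcont : ContinuousOn φ Kc := by
      have hmin : ContinuousOn
          (fun q : (ℝ × ℝ) × ℝ => min q.1.1 (c0 * q.1.2 ^ ((2 : ℝ) / 3))) Kc :=
        (continuous_fst.fst.continuousOn).inf hV2
      have h1 : ContinuousOn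
          (fun q : (ℝ × ℝ) × ℝ => (min q.1.1 (c0 * q.1.2 ^ ((2 : ℝ) / 3))) ^ mu) Kc :=
        hmin.rpow_const (fun q _ => Or.inr hmu.le)
      have h2 : ContinuousOn (fun q : (ℝ × ℝ) × ℝ => q.1.2 ^ sg) Kc :=
        (continuous_fst.snd.continuousOn).rpow_const (fun q hq => Or.inl (hVpos q hq).ne')
      exact ((continuousOn_const.mul h1).mul h2).mul continuous_snd.continuousOn
    have hφpos : ∀ q ∈ Kc, 0 < φ q := by
      intro q hq
      have hL : 0 < c0 * q.1.2 ^ ((2 : ℝ) / 3) :=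
        mul_pos c0_pos (Real.rpow_pos_of_pos (hVpos q hq) _)
      have hminpos : 0 < min q.1.1 (c0 * q.1.2 ^ ((2 : ℝ) / 3)) := lt_min (hApos q hq) hL
      exact mul_pos (mul_pos (mul_pos hR0 (Real.rpow_pos_of_pos hminpos _))
        (Real.rpow_pos_of_pos (hVpos q hq) _)) (htpos q hq)
    obtain ⟨q₀, hq₀K, hq₀⟩ := hKc.exists_isMinOn hne hφcont
    have hc₁ : 0 < φ q₀ := hφpos q₀ hq₀K
    have hψcont : ContinuousOn
        (fun q : (ℝ × ℝ) × ℝ => |q.1.1 - c0 * q.1.2 ^ ((2 : ℝ) / 3)|) Kc :=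
      ((continuous_fst.fst.continuousOn).sub hV2).abs
    obtain ⟨q₁, hq₁K, hq₁⟩ := hKc.exists_isMaxOn hne hψcont
    set C := |q₁.1.1 - c0 * q₁.1.2 ^ ((2 : ℝ) / 3)| with hCdef
    have hC : 0 ≤ C := abs_nonneg _
    have hbound : ∀ ε ∈ Ioi (0 : ℝ), ∀ q ∈ Kc,
        |x ε q.1 q.2 - c0 * q.1.2 ^ ((2 : ℝ) / 3)| ≤ C * Real.exp (-(φ q₀) / ε) := by
      intro ε hε q hq
      have hεp : (0 : ℝ) < ε := hε
      have hPq : q.1 ∈ Quad := (hKsub hq).1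
      have key := aux_key r mu sg R₀ hmu hR0 hr_pos hr_lower ε q.1.1 q.1.2 hεp hPq.1 hPq.2
        (x ε q.1) (hx0 ε hεp q.1 hPq) (fun t ht => hx_pos ε hεp q.1 hPq t ht)
        (fun t ht => hode ε hεp q.1 hPq t ht) q.2 (htpos q hq).le
      refine key.trans ?_
      have hφq : φ q₀ ≤ φ q := isMinOn_iff.mp hq₀ q hq
      simp only [hφdef] at hφq
      apply mul_le_mul (isMaxOn_iff.mp hq₁ q hq) ?_ (Real.exp_pos _).le hC
      apply Real.exp_le_exp.2
      have hφq' : φ q₀ ≤ R₀ * (min q.1.1 (c0 * q.1.2 ^ ((2 : ℝ) / 3))) ^ mu * q.1.2 ^ sg * q.2 :=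
        hφq
      gcongr
    have htend : Tendsto (fun ε : ℝ => C * Real.exp (-(φ q₀) / ε)) (𝓝[>] (0 : ℝ)) (𝓝 0) := by
      have h2 : Tendsto (fun ε : ℝ => φ q₀ / ε) (𝓝[>] (0 : ℝ)) atTop := by
        simpa [div_eq_mul_inv] using tendsto_inv_nhdsGT_zero.const_mul_atTop hc₁
      have h1 : Tendsto (fun ε : ℝ => -(φ q₀) / ε) (𝓝[>] (0 : ℝ)) atBot := by
        have h4 := tendsto_neg_atTop_atBot.comp h2
        simp only [Function.comp_def] at h4
        simpa [neg_div] using h4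
      have h3 : Tendsto (fun ε : ℝ => Real.exp (-(φ q₀) / ε)) (𝓝[>] (0 : ℝ)) (𝓝 0) :=
        Real.tendsto_exp_atBot.comp h1
      simpa using h3.const_mul C
    rw [Metric.tendstoUniformlyOn_iff]
    intro δ hδ
    filter_upwards [htend.eventually_lt_const hδ, self_mem_nhdsWithin] with ε h1 h2 q hq
    rw [Real.dist_eq, abs_sub_comm]
    exact lt_of_le_of_lt (hbound ε h2 q hq) h1
  constructor
  · intro p hp t ht
    have h := huni {(p, t)} isCompact_singleton
      (by rintro q hq; rw [mem_singleton_iff] at hq; subst hq; exact ⟨hp, ht⟩)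
    simpa using h.tendsto_at (mem_singleton _)
  · exact huni
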